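/- Euler–Lagrange equation is equivalent to the string equation: let u ∈ ℝ[[t_0, t_1, t_2, …]] be a formal power series not involving λ. Then Σ_{n≥0} (t_n − δ_{n,1}) · ((1 − λ ∂/∂λ) R_n)[u] = 0 holds in ℝ[λ][[t_0, t_1, t_2, …]] if and only if the string equation u = Σ_{k≥1} t_k R_k[u] + t_0 holds (equivalently, Σ_{n≥0} (t_n − δ_{n,1}) R_n[u] = 0). Here δ_{n,1} is the Kronecker delta and all infinite sums are well-defined coefficientwise. -/

import Mathlib

open MvPolynomial

/-- The derivation `∂ₓ = Σ_{k≥0} u_{k+1} ∂/∂u_k` on `A = ℝ[u₀, u₁, …]`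
(the sum is finite on each polynomial). -/
noncomputable def dx (f : MvPolynomial ℕ ℝ) : MvPolynomial ℕ ℝ :=
  ∑ᶠ k : ℕ, X (k + 1) * pderiv k f

/-- The λ-linear extension of `∂ₓ` to `A[λ]` (acting on coefficients). -/
noncomputable def dxP (p : Polynomial (MvPolynomial ℕ ℝ)) :
    Polynomial (MvPolynomial ℕ ℝ) :=
  p.sum fun n a => Polynomial.C (dx a) * Polynomial.X ^ n

/-- `p ∈ A[λ]` has zero constant term: the constant term (in the variables `u_k`)
of every `λ`-coefficient of `p` vanishes. -/
def NoConst (p : Polynomial (MvPolynomial ℕ ℝ)) : Prop :=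
  ∀ i : ℕ, coeff 0 (p.coeff i) = 0

/-- `R : ℕ → A[λ]` is the sequence of Gelfand–Dickey polynomials:
`R 0 = 1`, each `R n` for `n ≥ 1` has zero constant term, and the Lenard recursion
`(2n+1) ∂ₓ R_{n+1} = u₁ R_n + 2 u₀ ∂ₓ R_n + (λ²/4) ∂ₓ³ R_n` holds. -/
def IsGD (R : ℕ → Polynomial (MvPolynomial ℕ ℝ)) : Prop :=
  R 0 = 1 ∧ (∀ n : ℕ, 1 ≤ n → NoConst (R n)) ∧
  ∀ n : ℕ,
    Polynomial.C (MvPolynomial.C (2 * (n : ℝ) + 1)) * dxP (R (n + 1)) =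
      Polynomial.C (X 1) * R n
      + Polynomial.C (MvPolynomial.C 2 * X 0) * dxP (R n)
      + Polynomial.C (MvPolynomial.C (1 / 4 : ℝ)) * Polynomial.X ^ 2
          * dxP (dxP (dxP (R n)))

/-- Formal partial derivative `∂/∂t₀` on `MvPowerSeries ℕ S`, defined coefficientwise. -/
noncomputable def D0 {S : Type*} [CommSemiring S] (f : MvPowerSeries ℕ S) :
    MvPowerSeries ℕ S :=
  fun m => (m 0 + 1 : ℕ) • MvPowerSeries.coeff (R := S) (m + Finsupp.single 0 1) f

/-- Substitution `P ↦ P[u]`: substitute `u_k ↦ v k` and `λ ↦ lam` in `P ∈ A[λ]`. -/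
noncomputable def substP {S : Type*} [CommRing S] [Algebra ℝ S]
    (lam : S) (v : ℕ → S) (P : Polynomial (MvPolynomial ℕ ℝ)) : S :=
  Polynomial.eval₂ (MvPolynomial.aeval v).toRingHom lam P

/-- `P[u]` for `u ∈ ℝ[[t₀,t₁,…]]` not involving `λ`, landing in `ℝ[λ][[t₀,t₁,…]]`:
substitute `u_k ↦ ∂_{t₀}^k u` and `λ ↦ λ`. -/
noncomputable def sb' (u : MvPowerSeries ℕ ℝ)
    (P : Polynomial (MvPolynomial ℕ ℝ)) : MvPowerSeries ℕ (Polynomial ℝ) :=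
  substP (MvPowerSeries.C (σ := ℕ) (R := Polynomial ℝ) Polynomial.X)
    (fun k => D0^[k] (MvPowerSeries.map (σ := ℕ) (Polynomial.C : ℝ →+* Polynomial ℝ) u)) P



lemma sub_single_add {s : ℕ →₀ ℕ} {i : ℕ} (h : s i ≠ 0) :
    s - Finsupp.single i 1 + Finsupp.single i 1 = s := by
  ext j
  simp only [Finsupp.add_apply, Finsupp.tsub_apply, Finsupp.single_apply]
  split_ifs with hj
  · subst hj; omega
  · omega

lemma coeff_pderiv (i : ℕ) (m : ℕ →₀ ℕ) (f : MvPolynomial ℕ ℝ) :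
    coeff m (pderiv i f) = (m i + 1) * coeff (m + Finsupp.single i 1) f := by
  induction f using MvPolynomial.induction_on' with
  | add p q hp hq => simp [map_add, hp, hq, mul_add]
  | monomial s a =>
    rw [pderiv_monomial, coeff_monomial, coeff_monomial]
    by_cases h : s i = 0
    · have h1 : s - Finsupp.single i 1 = s := by
        ext j
        simp only [Finsupp.tsub_apply, Finsupp.single_apply]
        split_ifs with hj
        · subst hj; omega
        · omega
      have h2 : s ≠ m + Finsupp.single i 1 := by
        intro he; apply absurd h; rw [he]; simp
      rw [h1, if_neg h2]
      split_ifs with h3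
      · subst h3; simp [h]
      · simp
    · have key : (s - Finsupp.single i 1 = m) ↔ (s = m + Finsupp.single i 1) := by
        constructor
        · intro he
          rw [← he, sub_single_add h]
        · intro he
          subst he
          ext j
          simp only [Finsupp.tsub_apply, Finsupp.add_apply, Finsupp.single_apply]
          omega
      by_cases h3 : s = m + Finsupp.single i 1
      · rw [if_pos (key.mpr h3), if_pos h3]
        have : s i = m i + 1 := by rw [h3]; simp
        rw [this]; push_cast; ring
      · rw [if_neg (fun he => h3 (key.mp he)), if_neg h3, mul_zero]

lemma pderiv_ne_zero_of_mem_vars {i : ℕ} {f : MvPolynomial ℕ ℝ} (h : i ∈ f.vars) :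
    pderiv i f ≠ 0 := by
  rw [mem_vars] at h
  obtain ⟨d, hd, hi⟩ := h
  intro h0
  have hdi : d i ≠ 0 := Finsupp.mem_support_iff.mp hi
  have hcoef := coeff_pderiv i (d - Finsupp.single i 1) f
  rw [h0, sub_single_add hdi] at hcoef
  rcases mul_eq_zero.mp (by simpa using hcoef.symm : _ * coeff d f = 0) with h1 | h2
  · exact Nat.cast_add_one_ne_zero _ h1
  · exact MvPolynomial.mem_support_iff.mp hd h2

lemma vars_pderiv_subset (k : ℕ) (f : MvPolynomial ℕ ℝ) :
    (pderiv k f).vars ⊆ f.vars := by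
  intro i hi
  rw [mem_vars] at hi ⊢
  obtain ⟨d, hd, hi⟩ := hi
  have hcd : coeff d (pderiv k f) ≠ 0 := MvPolynomial.mem_support_iff.mp hd
  rw [coeff_pderiv] at hcd
  refine ⟨d + Finsupp.single k 1, MvPolynomial.mem_support_iff.mpr ?_, ?_⟩
  · intro h0; rw [h0, mul_zero] at hcd; exact hcd rfl
  · simp only [Finsupp.mem_support_iff] at hi ⊢
    simp only [Finsupp.add_apply]
    omega

lemma dx_eq_sum (f : MvPolynomial ℕ ℝ) {s : Finset ℕ} (hs : f.vars ⊆ s) :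
    dx f = ∑ k ∈ s, X (k + 1) * pderiv k f := by
  apply finsum_eq_sum_of_support_subset
  intro k hk
  simp only [Function.mem_support, ne_eq] at hk
  by_contra hks
  have : pderiv k f = 0 := pderiv_eq_zero_of_notMem_vars (fun hv => hks (hs hv))
  rw [this, mul_zero] at hk
  exact hk rfl

lemma dx_C (r : ℝ) : dx (MvPolynomial.C r) = 0 := by
  rw [dx_eq_sum _ (s := ∅) (by simp [vars_C])]
  simp

lemma dx_zero : dx 0 = 0 := by simpa using dx_C 0

lemma dx_add (f g : MvPolynomial ℕ ℝ) : dx (f + g) = dx f + dx g := by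
  classical
  set s := f.vars ∪ g.vars ∪ (f + g).vars with hs
  rw [dx_eq_sum f (s := s) (by intro i hi; simp [hs, hi]),
      dx_eq_sum g (s := s) (by intro i hi; simp [hs, hi]),
      dx_eq_sum (f + g) (s := s) (by intro i hi; simp [hs, hi]), ← Finset.sum_add_distrib]
  apply Finset.sum_congr rfl
  intro k _
  rw [map_add, mul_add]

lemma dx_neg (f : MvPolynomial ℕ ℝ) : dx (-f) = - dx f := by
  have := dx_add f (-f)
  simp only [add_neg_cancel, dx_zero] at this
  exact (neg_eq_of_add_eq_zero_right this.symm).symm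

lemma dx_sub (f g : MvPolynomial ℕ ℝ) : dx (f - g) = dx f - dx g := by
  rw [sub_eq_add_neg, dx_add, dx_neg, sub_eq_add_neg]

lemma dx_X0 : dx (X 0) = X 1 := by
  rw [dx_eq_sum _ (s := {0}) (by simp [vars_X])]
  simp

lemma eq_C_of_vars_empty {f : MvPolynomial ℕ ℝ} (h : f.vars = ∅) :
    f = MvPolynomial.C (constantCoeff f) := by
  ext m
  rw [coeff_C]
  split_ifs with hm
  · subst hm; rfl
  · by_contra hc
    obtain ⟨i, hi⟩ : ∃ i, m i ≠ 0 := by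
      by_contra hall
      push_neg at hall
      exact hm (Finsupp.ext fun j => (hall j).symm)
    have : i ∈ f.vars := mem_vars i |>.mpr
      ⟨m, MvPolynomial.mem_support_iff.mpr hc, Finsupp.mem_support_iff.mpr hi⟩
    rw [h] at this
    exact absurd this (Finset.notMem_empty i)

lemma dx_ker {f : MvPolynomial ℕ ℝ} (h : dx f = 0) :
    f = MvPolynomial.C (constantCoeff f) := by
  suffices H : ∀ N : ℕ, ∀ f : MvPolynomial ℕ ℝ, dx f = 0 →
      (∀ i ∈ f.vars, i < N) → f = MvPolynomial.C (constantCoeff f) by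
    apply H ((f.vars.sup id) + 1) f h
    intro i hi
    have := Finset.le_sup (f := id) hi
    simpa using Nat.lt_succ_of_le this
  intro N
  induction N with
  | zero =>
    intro f hdx hv
    apply eq_C_of_vars_empty
    exact Finset.eq_empty_of_forall_notMem fun i hi => Nat.not_lt_zero i (hv i hi)
  | succ N ih =>
    intro f hdx hv
    have hvars : f.vars ⊆ Finset.range (N + 1) := fun i hi => Finset.mem_range.mpr (hv i hi)
    have hstep : pderiv N f = 0 := by
      have hd : (0 : MvPolynomial ℕ ℝ) = pderiv (N + 1) (dx f) := by rw [hdx]; simp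
      rw [dx_eq_sum f hvars, map_sum] at hd
      have : ∀ k ∈ Finset.range (N + 1),
          pderiv (N + 1) (X (k + 1) * pderiv k f) =
            if k = N then pderiv N f else 0 := by
        intro k hk
        rw [pderiv_mul]
        have h2 : pderiv (N + 1) (pderiv k f) = 0 := by
          apply pderiv_eq_zero_of_notMem_vars
          intro hmem
          have := hv _ (vars_pderiv_subset k f hmem)
          omega
        rw [h2, mul_zero, add_zero]
        rcases eq_or_ne k N with rfl | hkN
        · simp
        · rw [pderiv_X_of_ne (by omega), zero_mul, if_neg hkN]
      rw [Finset.sum_congr rfl this, Finset.sum_ite_eq' _ N, if_pos (by simp)] at hd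
      exact hd.symm
    have hNv : N ∉ f.vars := fun hmem => pderiv_ne_zero_of_mem_vars hmem hstep
    apply ih f hdx
    intro i hi
    have := hv i hi
    rcases Nat.lt_succ_iff_lt_or_eq.mp this with h1 | h2
    · exact h1
    · exact absurd (h2 ▸ hi) hNv
lemma dx_ker0 {f : MvPolynomial ℕ ℝ} (h : dx f = 0) (h0 : constantCoeff f = 0) :
    f = 0 := by rw [dx_ker h, h0, map_zero]

lemma dxP_coeff (p : Polynomial (MvPolynomial ℕ ℝ)) (i : ℕ) :
    (dxP p).coeff i = dx (p.coeff i) := by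
  rw [dxP, Polynomial.sum_def, Polynomial.finset_sum_coeff]
  simp only [Polynomial.coeff_C_mul, Polynomial.coeff_X_pow]
  rw [Finset.sum_congr rfl (fun n _ => by rw [mul_ite, mul_one, mul_zero]),
    Finset.sum_ite_eq p.support i]
  split_ifs with h
  · rfl
  · rw [Polynomial.notMem_support_iff.mp h, dx_zero]

lemma dxP_zero : dxP (0 : Polynomial (MvPolynomial ℕ ℝ)) = 0 := by
  refine Polynomial.ext fun i => ?_
  rw [dxP_coeff]
  simp [dx_zero]

lemma dxP_one : dxP (1 : Polynomial (MvPolynomial ℕ ℝ)) = 0 := by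
  refine Polynomial.ext fun i => ?_
  rw [dxP_coeff, Polynomial.coeff_zero, Polynomial.coeff_one]
  split_ifs with h
  · rw [← MvPolynomial.C_1, dx_C]
  · exact dx_zero

lemma GD_R1 {R : ℕ → Polynomial (MvPolynomial ℕ ℝ)} (hR : IsGD R) :
    R 1 = Polynomial.C (X 0) := by
  obtain ⟨h0, hnc, hrec⟩ := hR
  have h := hrec 0
  rw [h0, dxP_one] at h
  simp only [Nat.cast_zero, mul_zero, zero_add, map_one, one_mul, mul_one, mul_zero,
    dxP_zero, add_zero] at h
  -- h : dxP (R 1) = Polynomial.C (X 1) (hopefully)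
  have hd : ∀ i, dx ((R 1).coeff i) = (Polynomial.C (X 1) : Polynomial (MvPolynomial ℕ ℝ)).coeff i := by
    intro i
    rw [← dxP_coeff, h]
  refine Polynomial.ext fun i => ?_
  rcases Nat.eq_zero_or_pos i with rfl | hi
  · have h1 : dx ((R 1).coeff 0 - X 0) = 0 := by
      rw [dx_sub, dx_X0, hd 0, Polynomial.coeff_C_zero, sub_self]
    have h2 : constantCoeff ((R 1).coeff 0 - X 0) = 0 := by
      rw [map_sub]
      have := hnc 1 le_rfl 0
      rw [constantCoeff_eq] at *
      simp [this]
    have := dx_ker0 h1 h2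
    rw [sub_eq_zero] at this
    rw [this, Polynomial.coeff_C_zero]
  · have h1 : dx ((R 1).coeff i) = 0 := by
      rw [hd i, Polynomial.coeff_C, if_neg (by omega : ¬ i = 0)]
    have h2 : constantCoeff ((R 1).coeff i) = 0 := by
      rw [constantCoeff_eq]; exact hnc 1 le_rfl i
    rw [dx_ker0 h1 h2, Polynomial.coeff_C, if_neg (by omega : ¬ i = 0)]

lemma GD_even {R : ℕ → Polynomial (MvPolynomial ℕ ℝ)} (hR : IsGD R) :
    ∀ n j, Odd j → (R n).coeff j = 0 := by
  obtain ⟨h0, hnc, hrec⟩ := hR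
  intro n
  induction n with
  | zero =>
    intro j hj
    rw [h0, Polynomial.coeff_one, if_neg]
    rintro rfl
    simp at hj
  | succ n ih =>
    intro j hj
    have h := congrArg (fun p => Polynomial.coeff p j) (hrec n)
    simp only [Polynomial.coeff_add, Polynomial.coeff_C_mul, dxP_coeff] at h
    have e1 : (R n).coeff j = 0 := ih j hj
    have e2 : (Polynomial.C (MvPolynomial.C (1/4 : ℝ)) * Polynomial.X ^ 2 *
        dxP (dxP (dxP (R n)))).coeff j = 0 := by
      rw [mul_assoc, Polynomial.coeff_C_mul, Polynomial.coeff_X_pow_mul']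
      split_ifs with h2
      · have hodd : Odd (j - 2) := by
          rcases hj with ⟨t, rfl⟩
          exact ⟨t - 1, by omega⟩
        rw [dxP_coeff, dxP_coeff, dxP_coeff, ih _ hodd, dx_zero, dx_zero, dx_zero, mul_zero]
      · rw [mul_zero]
    rw [e1, e2, dx_zero, mul_zero, zero_add] at h
    have h' : (MvPolynomial.C (2 * (n:ℝ) + 1) : MvPolynomial ℕ ℝ) *
        dx ((R (n+1)).coeff j) = 0 := by
      rw [h]
      simp [e1]
    have hC : (MvPolynomial.C (2 * (n:ℝ) + 1) : MvPolynomial ℕ ℝ) ≠ 0 := by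
      rw [Ne, MvPolynomial.C_eq_zero]
      positivity
    have hdx : dx ((R (n+1)).coeff j) = 0 :=
      (mul_eq_zero.mp h').resolve_left hC
    apply dx_ker0 hdx
    rw [constantCoeff_eq]
    exact hnc (n+1) (by omega) j




lemma coeff_D0 {S : Type*} [CommSemiring S] (g : MvPowerSeries ℕ S) (m : ℕ →₀ ℕ) :
    MvPowerSeries.coeff (R := S) m (D0 g) =
      (m 0 + 1 : ℕ) • MvPowerSeries.coeff (R := S) (m + Finsupp.single 0 1) g := rfl

lemma map_D0 (f : MvPowerSeries ℕ ℝ) :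
    MvPowerSeries.map (σ := ℕ) (Polynomial.C : ℝ →+* Polynomial ℝ) (D0 f) =
      D0 (MvPowerSeries.map (σ := ℕ) (Polynomial.C : ℝ →+* Polynomial ℝ) f) := by
  refine MvPowerSeries.ext fun m => ?_
  rw [MvPowerSeries.coeff_map, coeff_D0, coeff_D0, MvPowerSeries.coeff_map, map_nsmul]

lemma map_D0_iter (k : ℕ) (f : MvPowerSeries ℕ ℝ) :
    D0^[k] (MvPowerSeries.map (σ := ℕ) (Polynomial.C : ℝ →+* Polynomial ℝ) f) =
      MvPowerSeries.map (σ := ℕ) (Polynomial.C : ℝ →+* Polynomial ℝ) (D0^[k] f) := by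
  induction k with
  | zero => simp
  | succ k ih => rw [Function.iterate_succ_apply', Function.iterate_succ_apply', ih, map_D0]

lemma aeval_v (u : MvPowerSeries ℕ ℝ) (a : MvPolynomial ℕ ℝ) :
    MvPolynomial.aeval
        (fun k => D0^[k] (MvPowerSeries.map (σ := ℕ) (Polynomial.C : ℝ →+* Polynomial ℝ) u)) a =
      MvPowerSeries.map (σ := ℕ) (Polynomial.C : ℝ →+* Polynomial ℝ)
        (MvPolynomial.aeval (fun k => D0^[k] u) a) := by
  induction a using MvPolynomial.induction_on with
  | C r =>
    rw [aeval_C, aeval_C]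
    rw [MvPowerSeries.algebraMap_apply, MvPowerSeries.algebraMap_apply]
    refine MvPowerSeries.ext fun m => ?_
    classical
    rw [MvPowerSeries.coeff_map]
    simp [MvPowerSeries.coeff_C, apply_ite (Polynomial.C : ℝ →+* Polynomial ℝ)]
  | add p q hp hq => rw [map_add, map_add, hp, hq, map_add]
  | mul_X p n hp => rw [map_mul, map_mul, hp, aeval_X, aeval_X, map_D0_iter, map_mul]

noncomputable def w (u : MvPowerSeries ℕ ℝ) : ℕ → MvPowerSeries ℕ ℝ := fun k => D0^[k] u

lemma coeff_coeff_sb' (u : MvPowerSeries ℕ ℝ) (P : Polynomial (MvPolynomial ℕ ℝ))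
    (m : ℕ →₀ ℕ) (j : ℕ) :
    (MvPowerSeries.coeff (R := Polynomial ℝ) m (sb' u P)).coeff j =
      MvPowerSeries.coeff (R := ℝ) m (MvPolynomial.aeval (w u) (P.coeff j)) := by
  rw [sb', substP, Polynomial.eval₂_eq_sum, Polynomial.sum_def, map_sum,
    Polynomial.finset_sum_coeff]
  have hterm : ∀ i : ℕ,
      (MvPowerSeries.coeff (R := Polynomial ℝ) m
        ((MvPolynomial.aeval fun k => D0^[k]
            (MvPowerSeries.map (σ := ℕ) (Polynomial.C : ℝ →+* Polynomial ℝ) u)).toRingHom (P.coeff i) *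
          (MvPowerSeries.C (σ := ℕ) (R := Polynomial ℝ) Polynomial.X) ^ i)).coeff j =
      if j = i then MvPowerSeries.coeff (R := ℝ) m (MvPolynomial.aeval (w u) (P.coeff i)) else 0 := by
    intro i
    rw [← map_pow, MvPowerSeries.coeff_mul_C]
    have hv : (MvPolynomial.aeval fun k => D0^[k]
        (MvPowerSeries.map (σ := ℕ) (Polynomial.C : ℝ →+* Polynomial ℝ) u)).toRingHom (P.coeff i) =
        MvPowerSeries.map (σ := ℕ) (Polynomial.C : ℝ →+* Polynomial ℝ)
          (MvPolynomial.aeval (w u) (P.coeff i)) := aeval_v u (P.coeff i)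
    rw [hv, MvPowerSeries.coeff_map, Polynomial.coeff_C_mul, Polynomial.coeff_X_pow,
      mul_ite, mul_one, mul_zero]
  rw [Finset.sum_congr rfl fun i _ => hterm i, Finset.sum_ite_eq P.support j]
  split_ifs with h
  · rfl
  · rw [Polynomial.notMem_support_iff.mp h, map_zero, map_zero]

noncomputable def lop {Rg : Type*} [CommRing Rg] (q : Polynomial Rg) : Polynomial Rg :=
  q - Polynomial.X * Polynomial.derivative q

lemma coeff_X_mul_deriv {Rg : Type*} [CommRing Rg] (p : Polynomial Rg) (j : ℕ) :
    (Polynomial.X * Polynomial.derivative p).coeff j = j • p.coeff j := by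
  cases j with
  | zero => simp [Polynomial.mul_coeff_zero]
  | succ n =>
    rw [Polynomial.coeff_X_mul, Polynomial.coeff_derivative, nsmul_eq_mul]
    push_cast
    ring

lemma lop_coeff {Rg : Type*} [CommRing Rg] (q : Polynomial Rg) (j : ℕ) :
    (lop q).coeff j = q.coeff j - j • q.coeff j := by
  rw [lop, Polynomial.coeff_sub, coeff_X_mul_deriv]

lemma lop_zero {Rg : Type*} [CommRing Rg] : lop (0 : Polynomial Rg) = 0 := by
  simp [lop]

lemma lop_sub {Rg : Type*} [CommRing Rg] (a b : Polynomial Rg) :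
    lop (a - b) = lop a - lop b := by
  simp only [lop, map_sub]
  ring

lemma lop_sum {Rg : Type*} [CommRing Rg] {α : Type*} (s : Finset α) (f : α → Polynomial Rg) :
    lop (∑ n ∈ s, f n) = ∑ n ∈ s, lop (f n) := by
  simp only [lop, map_sum, Finset.mul_sum, Finset.sum_sub_distrib]

lemma lop_eq_zero_iff_of_even {q : Polynomial ℝ} (he : ∀ j, Odd j → q.coeff j = 0) :
    lop q = 0 ↔ q = 0 := by
  constructor
  · intro h
    refine Polynomial.ext fun j => ?_
    have hj : (lop q).coeff j = (0 : Polynomial ℝ).coeff j := by rw [h]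
    rw [lop_coeff] at hj
    simp only [Polynomial.coeff_zero] at hj ⊢
    rcases eq_or_ne j 1 with rfl | hj1
    · exact he 1 odd_one
    · have : (1 - (j : ℝ)) * q.coeff j = 0 := by
        rw [nsmul_eq_mul] at hj
        ring_nf
        ring_nf at hj
        linarith [hj]
      rcases mul_eq_zero.mp this with h1 | h2
      · exfalso
        have : (j : ℝ) = 1 := by linarith
        exact hj1 (by exact_mod_cast this)
      · exact h2
  · rintro rfl
    exact lop_zero

lemma coeff_X_mul_PS {S : Type*} [Semiring S] (s : ℕ) (f : MvPowerSeries ℕ S) (m : ℕ →₀ ℕ) :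
    MvPowerSeries.coeff (R := S) m (MvPowerSeries.X s * f) =
      if Finsupp.single s 1 ≤ m then
        MvPowerSeries.coeff (R := S) (m - Finsupp.single s 1) f else 0 := by
  rw [MvPowerSeries.X_def, MvPowerSeries.coeff_monomial_mul]
  simp only [one_mul]

lemma sb'_sub_X_deriv (u : MvPowerSeries ℕ ℝ) (P : Polynomial (MvPolynomial ℕ ℝ))
    (m : ℕ →₀ ℕ) :
    MvPowerSeries.coeff (R := Polynomial ℝ) m
        (sb' u (P - Polynomial.X * Polynomial.derivative P)) =
      lop (MvPowerSeries.coeff (R := Polynomial ℝ) m (sb' u P)) := by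
  refine Polynomial.ext fun j => ?_
  rw [coeff_coeff_sb', lop_coeff, coeff_coeff_sb']
  have hc : (P - Polynomial.X * Polynomial.derivative P).coeff j =
      P.coeff j - j • P.coeff j := by
    rw [Polynomial.coeff_sub, coeff_X_mul_deriv]
  rw [hc, map_sub, map_nsmul, map_sub, map_nsmul]

lemma sb'_one (u : MvPowerSeries ℕ ℝ) : sb' u 1 = 1 := by
  rw [sb', substP, Polynomial.eval₂_one]

lemma sb'_R1 {R : ℕ → Polynomial (MvPolynomial ℕ ℝ)} (hR : IsGD R)
    (u : MvPowerSeries ℕ ℝ) (m : ℕ →₀ ℕ) :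
    MvPowerSeries.coeff (R := Polynomial ℝ) m (sb' u (R 1)) =
      MvPowerSeries.coeff (R := Polynomial ℝ) m
        (MvPowerSeries.map (σ := ℕ) (Polynomial.C : ℝ →+* Polynomial ℝ) u) := by
  refine Polynomial.ext fun j => ?_
  rw [coeff_coeff_sb', GD_R1 hR, MvPowerSeries.coeff_map, Polynomial.coeff_C,
    Polynomial.coeff_C]
  split_ifs with h
  · subst h
    rw [show MvPolynomial.aeval (w u) (X 0) = u from by rw [aeval_X]; rfl]
  · rw [map_zero, map_zero]

lemma sb'_even {R : ℕ → Polynomial (MvPolynomial ℕ ℝ)} (hR : IsGD R)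
    (u : MvPowerSeries ℕ ℝ) (n : ℕ) (m : ℕ →₀ ℕ) {j : ℕ} (hj : Odd j) :
    (MvPowerSeries.coeff (R := Polynomial ℝ) m (sb' u (R n))).coeff j = 0 := by
  rw [coeff_coeff_sb', GD_even hR n j hj, map_zero, map_zero]

noncomputable def Tt (R : ℕ → Polynomial (MvPolynomial ℕ ℝ)) (u : MvPowerSeries ℕ ℝ)
    (m : ℕ →₀ ℕ) (n : ℕ) : Polynomial ℝ :=
  MvPowerSeries.coeff (R := Polynomial ℝ) m (MvPowerSeries.X n * sb' u (R n))

noncomputable def Gg (R : ℕ → Polynomial (MvPolynomial ℕ ℝ)) (u : MvPowerSeries ℕ ℝ)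
    (m : ℕ →₀ ℕ) (n : ℕ) : Polynomial ℝ :=
  Tt R u m n -
    (if n = 1 then MvPowerSeries.coeff (R := Polynomial ℝ) m (sb' u (R 1)) else 0)

lemma Gg_eq (R : ℕ → Polynomial (MvPolynomial ℕ ℝ)) (u : MvPowerSeries ℕ ℝ)
    (m : ℕ →₀ ℕ) (n : ℕ) :
    MvPowerSeries.coeff (R := Polynomial ℝ) m
        ((MvPowerSeries.X n - if n = 1 then 1 else 0) * sb' u (R n)) = Gg R u m n := by
  rw [sub_mul, map_sub, Gg, Tt]
  congr 1
  split_ifs with h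
  · subst h; rw [one_mul]
  · rw [zero_mul, map_zero]

lemma Ff_eq (R : ℕ → Polynomial (MvPolynomial ℕ ℝ)) (u : MvPowerSeries ℕ ℝ)
    (m : ℕ →₀ ℕ) (n : ℕ) :
    MvPowerSeries.coeff (R := Polynomial ℝ) m
        ((MvPowerSeries.X n - if n = 1 then 1 else 0) *
          sb' u (R n - Polynomial.X * Polynomial.derivative (R n))) =
      lop (Gg R u m n) := by
  rw [sub_mul, map_sub, Gg, lop_sub]
  congr 1
  · rw [coeff_X_mul_PS, Tt, coeff_X_mul_PS]
    split_ifs with h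
    · rw [sb'_sub_X_deriv]
    · rw [lop_zero]
  · split_ifs with h
    · subst h
      rw [one_mul, sb'_sub_X_deriv]
    · rw [zero_mul, map_zero, lop_zero]

lemma Gg_eq_zero (R : ℕ → Polynomial (MvPolynomial ℕ ℝ)) (u : MvPowerSeries ℕ ℝ)
    (m : ℕ →₀ ℕ) (n : ℕ) (h1 : ¬ Finsupp.single n 1 ≤ m) (h2 : n ≠ 1) :
    Gg R u m n = 0 := by
  rw [Gg, Tt, coeff_X_mul_PS, if_neg h1, if_neg h2, sub_zero]

lemma Gg_even {R : ℕ → Polynomial (MvPolynomial ℕ ℝ)} (hR : IsGD R)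
    (u : MvPowerSeries ℕ ℝ) (m : ℕ →₀ ℕ) (n : ℕ) {j : ℕ} (hj : Odd j) :
    (Gg R u m n).coeff j = 0 := by
  rw [Gg, Tt, coeff_X_mul_PS, Polynomial.coeff_sub]
  split_ifs with h1 h2 h2 <;>
    simp [sb'_even hR u _ _ hj]

lemma single_le_lt (m : ℕ →₀ ℕ) (n : ℕ) (h : Finsupp.single n 1 ≤ m) :
    n < m.support.sup id + 2 := by
  have h1 : 1 ≤ m n := by simpa using (Finsupp.le_def.mp h) n
  have h2 : n ∈ m.support := Finsupp.mem_support_iff.mpr (by omega)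
  have := Finset.le_sup (f := id) h2
  simp only [id] at this
  omega

lemma Gg_finsum (R : ℕ → Polynomial (MvPolynomial ℕ ℝ)) (u : MvPowerSeries ℕ ℝ)
    (m : ℕ →₀ ℕ) :
    (∑ᶠ n : ℕ, Gg R u m n) = ∑ n ∈ Finset.range (m.support.sup id + 2), Gg R u m n := by
  apply finsum_eq_sum_of_support_subset
  intro n hn
  simp only [Function.mem_support] at hn
  simp only [Finset.coe_range, Set.mem_Iio]
  by_contra hc
  refine hn (Gg_eq_zero R u m n (fun hle => hc (single_le_lt m n hle)) (by omega))

lemma lopGg_finsum (R : ℕ → Polynomial (MvPolynomial ℕ ℝ)) (u : MvPowerSeries ℕ ℝ)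
    (m : ℕ →₀ ℕ) :
    (∑ᶠ n : ℕ, lop (Gg R u m n)) =
      ∑ n ∈ Finset.range (m.support.sup id + 2), lop (Gg R u m n) := by
  apply finsum_eq_sum_of_support_subset
  intro n hn
  simp only [Function.mem_support] at hn
  simp only [Finset.coe_range, Set.mem_Iio]
  by_contra hc
  refine hn ?_
  rw [Gg_eq_zero R u m n (fun hle => hc (single_le_lt m n hle)) (by omega), lop_zero]

lemma main_AC {R : ℕ → Polynomial (MvPolynomial ℕ ℝ)} (hR : IsGD R)
    (u : MvPowerSeries ℕ ℝ) (m : ℕ →₀ ℕ) :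
    ((∑ᶠ n : ℕ, MvPowerSeries.coeff (R := Polynomial ℝ) m
        ((MvPowerSeries.X n - if n = 1 then 1 else 0)
          * sb' u (R n - Polynomial.X * Polynomial.derivative (R n)))) = 0) ↔
      ((∑ᶠ n : ℕ, MvPowerSeries.coeff (R := Polynomial ℝ) m
        ((MvPowerSeries.X n - if n = 1 then 1 else 0) * sb' u (R n))) = 0) := by
  rw [finsum_congr (Ff_eq R u m), finsum_congr (Gg_eq R u m),
    lopGg_finsum, Gg_finsum, ← lop_sum]
  apply lop_eq_zero_iff_of_even
  intro j hj
  rw [Polynomial.finset_sum_coeff]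
  exact Finset.sum_eq_zero fun n _ => Gg_even hR u m n hj

lemma main_CB {R : ℕ → Polynomial (MvPolynomial ℕ ℝ)} (hR : IsGD R)
    (u : MvPowerSeries ℕ ℝ) (m : ℕ →₀ ℕ) :
    ((∑ᶠ n : ℕ, MvPowerSeries.coeff (R := Polynomial ℝ) m
        ((MvPowerSeries.X n - if n = 1 then 1 else 0) * sb' u (R n))) = 0) ↔
      (MvPowerSeries.coeff (R := Polynomial ℝ) m
          (MvPowerSeries.map (σ := ℕ) (Polynomial.C : ℝ →+* Polynomial ℝ) u) =
        (∑ᶠ k : ℕ, MvPowerSeries.coeff (R := Polynomial ℝ) m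
            (MvPowerSeries.X (k + 1) * sb' u (R (k + 1))))
        + MvPowerSeries.coeff (R := Polynomial ℝ) m (MvPowerSeries.X 0)) := by
  set N := m.support.sup id + 2 with hN
  have hT : (∑ᶠ k : ℕ, MvPowerSeries.coeff (R := Polynomial ℝ) m
      (MvPowerSeries.X (k + 1) * sb' u (R (k + 1)))) =
      ∑ k ∈ Finset.range (N - 1), Tt R u m (k + 1) := by
    apply finsum_eq_sum_of_support_subset
    intro k hk
    simp only [Function.mem_support] at hk
    simp only [Finset.coe_range, Set.mem_Iio]
    by_contra hc
    apply hk
    show Tt R u m (k+1) = 0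
    rw [Tt, coeff_X_mul_PS, if_neg]
    intro hle
    exact hc (by have := single_le_lt m (k+1) hle; omega)
  have hsplit : ∑ n ∈ Finset.range N, Gg R u m n =
      ((∑ k ∈ Finset.range (N - 1), Tt R u m (k + 1)) + Tt R u m 0) -
        MvPowerSeries.coeff (R := Polynomial ℝ) m
          (MvPowerSeries.map (σ := ℕ) (Polynomial.C : ℝ →+* Polynomial ℝ) u) := by
    rw [show (Gg R u m) = fun n => Tt R u m n -
      (if n = 1 then MvPowerSeries.coeff (R := Polynomial ℝ) m (sb' u (R 1)) else 0) from rfl,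
      Finset.sum_sub_distrib]
    congr 1
    · rw [show N = (N - 1) + 1 from by omega, Finset.sum_range_succ']
      norm_num
    · rw [Finset.sum_ite_eq' (Finset.range N) 1, if_pos (by simp [hN]), sb'_R1 hR]
  have hT0 : Tt R u m 0 = MvPowerSeries.coeff (R := Polynomial ℝ) m (MvPowerSeries.X 0) := by
    rw [Tt, hR.1, sb'_one, mul_one]
  rw [finsum_congr (Gg_eq R u m), Gg_finsum, ← hN, hsplit, hT, hT0, sub_eq_zero, eq_comm]

/-- for `u ∈ ℝ[[t₀,t₁,…]]` (not involving `λ`), the Euler–Lagrange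
equation `Σ_{n≥0} (t_n − δ_{n,1}) ((1 − λ∂/∂λ)R_n)[u] = 0` in `ℝ[λ][[t₀,t₁,…]]`
holds iff the string equation `u = Σ_{k≥1} t_k R_k[u] + t₀` holds (equivalently,
`Σ_{n≥0} (t_n − δ_{n,1}) R_n[u] = 0`); all sums are coefficientwise (finite). -/
theorem eulerLagrange_iff_string (R : ℕ → Polynomial (MvPolynomial ℕ ℝ))
    (hR : IsGD R) (u : MvPowerSeries ℕ ℝ) :
    ((∀ m : ℕ →₀ ℕ,
        (∑ᶠ n : ℕ, MvPowerSeries.coeff (R := Polynomial ℝ) m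
            ((MvPowerSeries.X n - if n = 1 then 1 else 0)
              * sb' u (R n - Polynomial.X * Polynomial.derivative (R n)))) = 0) ↔
      (∀ m : ℕ →₀ ℕ,
        MvPowerSeries.coeff (R := Polynomial ℝ) m
            (MvPowerSeries.map (σ := ℕ) (Polynomial.C : ℝ →+* Polynomial ℝ) u) =
          (∑ᶠ k : ℕ, MvPowerSeries.coeff (R := Polynomial ℝ) m
              (MvPowerSeries.X (k + 1) * sb' u (R (k + 1))))
          + MvPowerSeries.coeff (R := Polynomial ℝ) m (MvPowerSeries.X 0))) ∧
    ((∀ m : ℕ →₀ ℕ,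
        MvPowerSeries.coeff (R := Polynomial ℝ) m
            (MvPowerSeries.map (σ := ℕ) (Polynomial.C : ℝ →+* Polynomial ℝ) u) =
          (∑ᶠ k : ℕ, MvPowerSeries.coeff (R := Polynomial ℝ) m
              (MvPowerSeries.X (k + 1) * sb' u (R (k + 1))))
          + MvPowerSeries.coeff (R := Polynomial ℝ) m (MvPowerSeries.X 0)) ↔
      (∀ m : ℕ →₀ ℕ,
        (∑ᶠ n : ℕ, MvPowerSeries.coeff (R := Polynomial ℝ) m
            ((MvPowerSeries.X n - if n = 1 then 1 else 0) * sb' u (R n))) = 0)) := by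
  exact ⟨forall_congr' fun m => (main_AC hR u m).trans (main_CB hR u m),
    forall_congr' fun m => (main_CB hR u m).symm⟩
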